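/- arXiv:0811.1357 — 3 statements merged into one kernel-verified Lean document; each statement's English description precedes it below -/
import Mathlib

section
/- (Algebraic content of Proposition 2: covariance of the vector covariant derivative.) Let Λ, V, dV, dΛ, ω ∈ ℂ⊗ℍ with Λ·Λ̄ = 1, and set ω' := Λ·ω·Λ̄ − dΛ·Λ̄. Define the Leibniz expansion d(ΛVΛ̄*) := dΛ·V·Λ̄* + Λ·dV·Λ̄* + Λ·V·(dΛ)‾* (using that the conjugations commute with the derivative, so ∂(Λ̄*) = (∂Λ)‾*). Then d(ΛVΛ̄*) + ω'·(Λ·V·Λ̄*) + (Λ·V·Λ̄*)·(ω'‾*) = Λ·(dV + ω·V + V·ω̄*)·Λ̄*. -/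
open scoped Quaternion

noncomputable section

/-- Componentwise complex conjugation `x ↦ x*` on the complexified quaternions `ℂ⊗ℍ`. -/
def cconj (x : ℍ[ℂ]) : ℍ[ℂ] :=
  ⟨(starRingEnd ℂ) x.re, (starRingEnd ℂ) x.imI, (starRingEnd ℂ) x.imJ, (starRingEnd ℂ) x.imK⟩

/-- `x̄*`: quaternionic conjugation (the star operation, negating the three imaginary
components) followed by componentwise complex conjugation. -/
def barStar (x : ℍ[ℂ]) : ℍ[ℂ] := cconj (star x)

/-- The bilinear inner product `⟨x,y⟩ = (x·ȳ).re`, so that `2⟨x,y⟩ = x·ȳ + y·x̄`. -/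
def ip (x y : ℍ[ℂ]) : ℂ := (x * star y).re

lemma cconj_mul (x y : ℍ[ℂ]) : cconj (x * y) = cconj x * cconj y := by
  ext <;> simp only [Quaternion.re_mul, Quaternion.imI_mul, Quaternion.imJ_mul, Quaternion.imK_mul] <;>
  simp [cconj, Quaternion.ext_iff, Quaternion.re_mul, Quaternion.imI_mul,
    Quaternion.imJ_mul, Quaternion.imK_mul, map_mul, map_add, map_sub]

lemma cconj_one : cconj (1 : ℍ[ℂ]) = 1 := by
  simp [cconj, Quaternion.ext_iff]
  rfl

lemma cconj_sub (x y : ℍ[ℂ]) : cconj (x - y) = cconj x - cconj y := by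
  simp [cconj, Quaternion.ext_iff, map_sub]
  rfl

lemma barStar_mul (x y : ℍ[ℂ]) : barStar (x * y) = barStar y * barStar x := by
  rw [barStar, star_mul, cconj_mul]; rfl

lemma barStar_sub (x y : ℍ[ℂ]) : barStar (x - y) = barStar x - barStar y := by
  rw [barStar, star_sub (R := ℍ[ℂ]), cconj_sub]; rfl

/-- Algebraic content of Proposition 2 (covariance of the vector covariant
derivative): with `Λ·Λ̄ = 1` and `ω' = Λ·ω·Λ̄ − dΛ·Λ̄`, the Leibniz expansion of
`∂(ΛVΛ̄*)` plus the transformed connection terms equals `Λ·(∂V + ωV + Vω̄*)·Λ̄*`. -/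
theorem stmt6 (Λ V dV dΛ ω ω' : ℍ[ℂ]) (hΛ : Λ * star Λ = 1)
    (hω' : ω' = Λ * ω * star Λ - dΛ * star Λ) :
    (dΛ * V * barStar Λ + Λ * dV * barStar Λ + Λ * V * barStar dΛ)
        + ω' * (Λ * V * barStar Λ) + (Λ * V * barStar Λ) * barStar ω'
      = Λ * (dV + ω * V + V * barStar ω) * barStar Λ := by
  have hΛ' : star Λ * Λ = 1 := by rw [star_comm_self', hΛ]
  -- barStar Λ * cconj Λ = 1
  have hb : barStar Λ * cconj Λ = 1 := by
    have : barStar Λ * cconj Λ = cconj (star Λ * Λ) := by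
      rw [cconj_mul]; rfl
    rw [this, hΛ', cconj_one]
  have h1 : ω' * (Λ * V * barStar Λ) = Λ * ω * V * barStar Λ - dΛ * V * barStar Λ := by
    rw [hω', sub_mul]
    have e1 : Λ * ω * star Λ * (Λ * V * barStar Λ)
        = Λ * ω * (star Λ * Λ) * (V * barStar Λ) := by noncomm_ring
    have e2 : dΛ * star Λ * (Λ * V * barStar Λ)
        = dΛ * (star Λ * Λ) * (V * barStar Λ) := by noncomm_ring
    rw [e1, e2, hΛ', mul_one, mul_one]
    noncomm_ring
  have h2 : (Λ * V * barStar Λ) * barStar ω'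
      = Λ * V * (barStar ω * barStar Λ) - Λ * V * barStar dΛ := by
    rw [hω', barStar_sub, barStar_mul, barStar_mul, barStar_mul]
    have hsΛ : barStar (star Λ) = cconj Λ := by rw [barStar, star_star]
    rw [hsΛ, mul_sub]
    congr 1
    · have : Λ * V * barStar Λ * (cconj Λ * (barStar ω * barStar Λ))
          = Λ * V * ((barStar Λ * cconj Λ) * (barStar ω * barStar Λ)) := by noncomm_ring
      rw [this, hb, one_mul]
    · have : Λ * V * barStar Λ * (cconj Λ * barStar dΛ)
          = Λ * V * ((barStar Λ * cconj Λ) * barStar dΛ) := by noncomm_ring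
      rw [this, hb, one_mul]
  rw [h1, h2]
  noncomm_ring
end
end

section
/- For all ω, x, y ∈ ℂ⊗ℍ one has the identity ⟨ω·x + x·ω̄*, y⟩ + ⟨x, ω·y + y·ω̄*⟩ = 2·⟨x,y⟩·⟨1, ω + ω̄*⟩, where ⟨1, ω + ω̄*⟩ equals the scalar component of ω + ω̄*. In particular, if Scal(ω + ω̄*) = 0, then ⟨ω·x + x·ω̄*, y⟩ + ⟨x, ω·y + y·ω̄*⟩ = 0. (This is the algebraic identity underlying metric compatibility, ∇_ρ g_{μν} = 0 and D_ρ g_{μν} = ∇_ρ g_{μν}, for the minimal connection.) -/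
open scoped Quaternion

noncomputable section

theorem cconj_re (x : ℍ[ℂ]) : (cconj x).re = (starRingEnd ℂ) x.re := rfl
theorem cconj_imI (x : ℍ[ℂ]) : (cconj x).imI = (starRingEnd ℂ) x.imI := rfl
theorem cconj_imJ (x : ℍ[ℂ]) : (cconj x).imJ = (starRingEnd ℂ) x.imJ := rfl
theorem cconj_imK (x : ℍ[ℂ]) : (cconj x).imK = (starRingEnd ℂ) x.imK := rfl

/-- The algebraic identity underlying metric compatibility:
`⟨ω·x + x·ω̄*, y⟩ + ⟨x, ω·y + y·ω̄*⟩ = 2·⟨x,y⟩·⟨1, ω + ω̄*⟩`, where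
`⟨1, ω + ω̄*⟩ = Scal(ω + ω̄*)`; in particular the left-hand side vanishes
when `Scal(ω + ω̄*) = 0`. -/
theorem stmt12 (ω x y : ℍ[ℂ]) :
    ip (ω * x + x * barStar ω) y + ip x (ω * y + y * barStar ω)
      = 2 * ip x y * ip 1 (ω + barStar ω) ∧
    ip 1 (ω + barStar ω) = (ω + barStar ω).re ∧
    ((ω + barStar ω).re = 0 →
      ip (ω * x + x * barStar ω) y + ip x (ω * y + y * barStar ω) = 0) := by
  refine ⟨?_, ?_, ?_⟩
  · simp only [ip, barStar, cconj_re, cconj_imI, cconj_imJ, cconj_imK, Quaternion.re_add, Quaternion.re_mul, Quaternion.re_star,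
      Quaternion.imI_star, Quaternion.imJ_star, Quaternion.imK_star, Quaternion.imI_add,
      Quaternion.imJ_add, Quaternion.imK_add, Quaternion.imI_mul, Quaternion.imJ_mul,
      Quaternion.imK_mul, Quaternion.re_one, Quaternion.imI_one, Quaternion.imJ_one,
      Quaternion.imK_one, map_neg]
    ring
  · simp only [ip, barStar, cconj_re, cconj_imI, cconj_imJ, cconj_imK, Quaternion.re_add, Quaternion.re_mul, Quaternion.re_star,
      Quaternion.imI_star, Quaternion.imJ_star, Quaternion.imK_star, Quaternion.re_one,
      Quaternion.imI_one, Quaternion.imJ_one, Quaternion.imK_one, map_neg]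
    ring
  · intro h
    simp only [ip, barStar, cconj_re, cconj_imI, cconj_imJ, cconj_imK, Quaternion.re_add, Quaternion.re_mul, Quaternion.re_star,
      Quaternion.imI_star, Quaternion.imJ_star, Quaternion.imK_star, Quaternion.imI_add,
      Quaternion.imJ_add, Quaternion.imK_add, Quaternion.imI_mul, Quaternion.imJ_mul,
      Quaternion.imK_mul, map_neg] at h ⊢
    linear_combination (2 * (x.re * y.re + x.imI * y.imI + x.imJ * y.imJ + x.imK * y.imK)) * h
end
end

section
/- The set {Λ ∈ ℂ⊗ℍ | Λ·Λ̄ = 1} is a group under quaternion multiplication, with identity element 1 and with the inverse of Λ given by Λ̄, and this group is isomorphic (as a group) to SL(2,ℂ), the special linear group of 2×2 complex matrices of determinant 1 — the double cover of the Lorentz group SO(3,1). -/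
open scoped Quaternion

noncomputable section

/-- The set `{Λ ∈ ℂ⊗ℍ | Λ·Λ̄ = 1}` of complexified quaternions of unit norm,
where `Λ̄` is quaternionic conjugation (the star operation). -/
def Sp1 : Type := {Λ : ℍ[ℂ] // Λ * star Λ = 1}

/-- `{Λ ∈ ℂ⊗ℍ | Λ·Λ̄ = 1}` is a group under quaternion multiplication, with
identity element `1` and the inverse of `Λ` given by `Λ̄`. -/
instance : Group Sp1 where
  mul a b := ⟨a.1 * b.1, by
    rw [star_mul, mul_assoc, ← mul_assoc b.1, b.2, one_mul, a.2]⟩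
  one := ⟨1, by simp⟩
  inv a := ⟨star a.1, by rw [star_star, star_comm_self', a.2]⟩
  mul_assoc a b c := Subtype.ext (mul_assoc a.1 b.1 c.1)
  one_mul a := Subtype.ext (one_mul a.1)
  mul_one a := Subtype.ext (mul_one a.1)
  inv_mul_cancel a := Subtype.ext (by
    show star a.1 * a.1 = 1
    rw [star_comm_self', a.2])

def qmat (x : ℍ[ℂ]) : Matrix (Fin 2) (Fin 2) ℂ :=
  !![x.re + x.imI * Complex.I, x.imJ + x.imK * Complex.I;
     -x.imJ + x.imK * Complex.I, x.re - x.imI * Complex.I]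

lemma qmat_mul (x y : ℍ[ℂ]) : qmat (x * y) = qmat x * qmat y := by
  ext i j
  fin_cases i <;> fin_cases j <;>
    simp [qmat, Matrix.mul_apply, Fin.sum_univ_two, Quaternion.re_mul,
      Quaternion.imI_mul, Quaternion.imJ_mul, Quaternion.imK_mul] <;>
    ring_nf <;> simp [Complex.I_sq] <;> ring

lemma qmat_det (x : ℍ[ℂ]) :
    (qmat x).det = x.re * x.re + x.imI * x.imI + x.imJ * x.imJ + x.imK * x.imK := by
  simp [qmat, Matrix.det_fin_two_of]
  ring_nf
  simp [Complex.I_sq]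
  ring

lemma mul_star_one_iff (x : ℍ[ℂ]) :
    x * star x = 1 ↔ x.re * x.re + x.imI * x.imI + x.imJ * x.imJ + x.imK * x.imK = 1 := by
  rw [Quaternion.ext_iff]
  simp only [Quaternion.re_mul, Quaternion.imI_mul, Quaternion.imJ_mul, Quaternion.imK_mul,
    Quaternion.re_star, Quaternion.imI_star, Quaternion.imJ_star, Quaternion.imK_star,
    Quaternion.re_one, Quaternion.imI_one, Quaternion.imJ_one, Quaternion.imK_one]
  constructor
  · rintro ⟨h, -⟩; linear_combination h
  · intro h; exact ⟨by linear_combination h, by ring, by ring, by ring⟩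

def qinv (M : Matrix (Fin 2) (Fin 2) ℂ) : ℍ[ℂ] :=
  ⟨(M 0 0 + M 1 1) / 2, (M 0 0 - M 1 1) / (2 * Complex.I),
   (M 0 1 - M 1 0) / 2, (M 0 1 + M 1 0) / (2 * Complex.I)⟩

def sp1Equiv : Sp1 ≃* Matrix.SpecialLinearGroup (Fin 2) ℂ where
  toFun a := ⟨qmat a.1, by rw [qmat_det, ← mul_star_one_iff]; exact a.2⟩
  invFun M := ⟨qinv M.1, by
    rw [mul_star_one_iff]
    have hd : (M.1).det = 1 := M.2
    rw [Matrix.det_fin_two] at hd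
    simp only [qinv]
    have hI2 : (Complex.I:ℂ)^2 = -1 := Complex.I_sq
    simp only [div_eq_mul_inv, mul_inv, Complex.inv_I]
    linear_combination hd +
      (((M.1 0 0 - M.1 1 1)^2 + (M.1 0 1 + M.1 1 0)^2) / 4) * hI2⟩
  left_inv a := by
    apply Subtype.ext
    show qinv (qmat a.1) = a.1
    rcases a.1 with ⟨r, i, j, k⟩
    simp only [qinv, qmat]
    ext <;> simp <;> field_simp <;> ring
  right_inv M := by
    apply Subtype.ext
    show qmat (qinv M.1) = M.1
    ext i j
    fin_cases i <;> fin_cases j <;>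
      · simp [qmat, qinv]
        field_simp
        ring
  map_mul' a b := by
    apply Subtype.ext
    show qmat (a.1 * b.1) = qmat a.1 * qmat b.1
    exact qmat_mul a.1 b.1

/-- The group `{Λ ∈ ℂ⊗ℍ | Λ·Λ̄ = 1}` — with multiplication the quaternion
multiplication, identity `1`, and inverse `Λ ↦ Λ̄` — is isomorphic to `SL(2,ℂ)`,
the double cover of the Lorentz group `SO(3,1)`. -/
theorem stmt16 :
    (∀ a b : Sp1, (a * b).1 = a.1 * b.1) ∧
    ((1 : Sp1)).1 = 1 ∧
    (∀ a : Sp1, (a⁻¹).1 = star a.1) ∧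
    Nonempty (Sp1 ≃* Matrix.SpecialLinearGroup (Fin 2) ℂ) := by
  exact ⟨fun a b => rfl, rfl, fun a => rfl, ⟨sp1Equiv⟩⟩
end
end
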